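/- With the WSABI-L setup, let π(x) = N(x; μ_π, Σ_π) be a Gaussian prior density with μ_π ∈ ℝ^d and Σ_π ∈ ℝ^{d×d} symmetric positive definite. Then for every α ∈ ℝ, ∫ (α + ½ m̃(x)²) π(x) dx = α + Σ_{i,j=1}^n w^m_{ij} N( (X_i + X_j)/2 ; μ_π, W/2 + Σ_π ), where w^m_{ij} := ½ v² ω_i ω_j N(X_i; X_j, 2W). -/

import Mathlib

open MeasureTheory Matrix Real

/-- The multivariate Gaussian density
`N(x; m, Σ) = det(2πΣ)^{-1/2} exp(-½ (x-m)ᵀ Σ⁻¹ (x-m))` on `ℝ^d`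
(for a symmetric positive definite covariance matrix `Σ`). -/
noncomputable def gaussDensity {d : ℕ} (m : Fin d → ℝ) (S : Matrix (Fin d) (Fin d) ℝ)
    (x : Fin d → ℝ) : ℝ :=
  (Real.sqrt ((2 * Real.pi) ^ d * S.det))⁻¹ *
    Real.exp (-(1 / 2) * ((x - m) ⬝ᵥ (S⁻¹ *ᵥ (x - m))))

/-- WSABI-L setup: the Gram matrix `K_XX` with entries
`(K_XX)_{ij} = v N(X_i; X_j, W)` of the squared-exponential kernel
`K(x, x') = v N(x; x', W)` at the points `X_1, …, X_n`. -/
noncomputable def gramKxx {d n : ℕ} (v : ℝ) (W : Matrix (Fin d) (Fin d) ℝ)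
    (X : Fin n → (Fin d → ℝ)) : Matrix (Fin n) (Fin n) ℝ :=
  Matrix.of fun i j => v * gaussDensity (X j) W (X i)

/-- WSABI-L setup: the Woodbury vector `ω := K_XX⁻¹ y`. -/
noncomputable def woodbury {d n : ℕ} (v : ℝ) (W : Matrix (Fin d) (Fin d) ℝ)
    (X : Fin n → (Fin d → ℝ)) (y : Fin n → ℝ) : Fin n → ℝ :=
  (gramKxx v W X)⁻¹ *ᵥ y

/-- WSABI-L setup: the Gaussian-process posterior mean
`m̃(x) := v Σ_i ω_i N(x; X_i, W)`. -/
noncomputable def gpMean {d n : ℕ} (v : ℝ) (W : Matrix (Fin d) (Fin d) ℝ)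
    (X : Fin n → (Fin d → ℝ)) (y : Fin n → ℝ) (x : Fin d → ℝ) : ℝ :=
  v * ∑ i, woodbury v W X y i * gaussDensity (X i) W x

/-- WSABI-L setup: the Gaussian-process posterior variance
`C̃(x) := v N(x; x, W) − v² Σ_{k,l} Ω_{kl} N(x; X_k, W) N(x; X_l, W)`,
where `Ω := K_XX⁻¹`. -/
noncomputable def gpVar {d n : ℕ} (v : ℝ) (W : Matrix (Fin d) (Fin d) ℝ)
    (X : Fin n → (Fin d → ℝ)) (x : Fin d → ℝ) : ℝ :=
  v * gaussDensity x W x -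
    v ^ 2 * ∑ k, ∑ l, (gramKxx v W X)⁻¹ k l *
      gaussDensity (X k) W x * gaussDensity (X l) W x


lemma integral_comp_mulVec {d : ℕ} (M : Matrix (Fin d) (Fin d) ℝ) (hM : M.det ≠ 0)
    (g : (Fin d → ℝ) → ℝ) :
    ∫ x, g (M *ᵥ x) = |M.det|⁻¹ * ∫ x, g x := by
  have hI : Invertible M := M.invertibleOfIsUnitDet (isUnit_iff_ne_zero.2 hM)
  let e₀ : (Fin d → ℝ) ≃ₗ[ℝ] (Fin d → ℝ) := M.toLinearEquiv' hI
  let e : (Fin d → ℝ) ≃ᵐ (Fin d → ℝ) := e₀.toContinuousLinearEquiv.toHomeomorph.toMeasurableEquiv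
  have he : ∀ x, e x = M *ᵥ x := fun x => by
    simp [e, e₀, Matrix.toLinearEquiv', Matrix.toLin'_apply]
  have hdet : LinearMap.det (e₀ : (Fin d → ℝ) →ₗ[ℝ] (Fin d → ℝ)) = M.det := by
    have : (e₀ : (Fin d → ℝ) →ₗ[ℝ] (Fin d → ℝ)) = Matrix.toLin' M := rfl
    rw [this, LinearMap.det_toLin']
  have hmap : Measure.map e volume = ENNReal.ofReal |M.det|⁻¹ • volume := by
    have : Measure.map (e₀ : (Fin d → ℝ) →ₗ[ℝ] (Fin d → ℝ)) volume
        = ENNReal.ofReal |(LinearMap.det (e₀ : (Fin d → ℝ) →ₗ[ℝ] (Fin d → ℝ)))⁻¹| • volume :=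
      Real.map_linearMap_volume_pi_eq_smul_volume_pi (by rw [hdet]; exact hM)
    rw [hdet, abs_inv] at this
    rw [← this]
    rfl
  calc ∫ x, g (M *ᵥ x) = ∫ x, g (e x) := by simp_rw [he]
    _ = ∫ y, g y ∂(Measure.map e volume) := (MeasureTheory.integral_map_equiv e g).symm
    _ = |M.det|⁻¹ * ∫ x, g x := by
        rw [hmap, integral_smul_measure, ENNReal.toReal_ofReal (by positivity), smul_eq_mul]

lemma integrable_comp_mulVec {d : ℕ} (M : Matrix (Fin d) (Fin d) ℝ) (hM : M.det ≠ 0)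
    {g : (Fin d → ℝ) → ℝ} (hg : Integrable g) :
    Integrable (fun x => g (M *ᵥ x)) := by
  have hI : Invertible M := M.invertibleOfIsUnitDet (isUnit_iff_ne_zero.2 hM)
  let e₀ : (Fin d → ℝ) ≃ₗ[ℝ] (Fin d → ℝ) := M.toLinearEquiv' hI
  let e : (Fin d → ℝ) ≃ᵐ (Fin d → ℝ) := e₀.toContinuousLinearEquiv.toHomeomorph.toMeasurableEquiv
  have he : ∀ x, e x = M *ᵥ x := fun x => by
    simp [e, e₀, Matrix.toLinearEquiv', Matrix.toLin'_apply]
  have hdet : LinearMap.det (e₀ : (Fin d → ℝ) →ₗ[ℝ] (Fin d → ℝ)) = M.det := by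
    have : (e₀ : (Fin d → ℝ) →ₗ[ℝ] (Fin d → ℝ)) = Matrix.toLin' M := rfl
    rw [this, LinearMap.det_toLin']
  have hmap : Measure.map e volume = ENNReal.ofReal |M.det|⁻¹ • volume := by
    have : Measure.map (e₀ : (Fin d → ℝ) →ₗ[ℝ] (Fin d → ℝ)) volume
        = ENNReal.ofReal |(LinearMap.det (e₀ : (Fin d → ℝ) →ₗ[ℝ] (Fin d → ℝ)))⁻¹| • volume :=
      Real.map_linearMap_volume_pi_eq_smul_volume_pi (by rw [hdet]; exact hM)
    rw [hdet, abs_inv] at this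
    rw [← this]
    rfl
  have : Integrable g (Measure.map e volume) := by
    rw [hmap]
    exact hg.smul_measure ENNReal.ofReal_ne_top
  have h2 := (MeasureTheory.integrable_map_equiv e g).mp this
  simpa [Function.comp_def, he] using h2


lemma integral_std_gauss {d : ℕ} :
    ∫ x : Fin d → ℝ, Real.exp (-(1/2) * (x ⬝ᵥ x)) = Real.sqrt (2 * π) ^ d := by
  have h1 : ∀ x : Fin d → ℝ, Real.exp (-(1/2) * (x ⬝ᵥ x))
      = ∏ i, Real.exp (-(1/2) * x i ^ 2) := by
    intro x
    rw [← Real.exp_sum, dotProduct, Finset.mul_sum]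
    congr 1
    apply Finset.sum_congr rfl
    intro i _
    ring_nf
  simp_rw [h1]
  rw [MeasureTheory.volume_pi, MeasureTheory.integral_fintype_prod_eq_pow (ι := Fin d) (fun t : ℝ => Real.exp (-(1/2) * t ^ 2))]
  have h2 : ∫ t : ℝ, Real.exp (-(1/2 * t ^ 2)) = Real.sqrt (π / (1/2)) := by
    simpa [neg_mul] using integral_gaussian (1/2 : ℝ)
  simp only [neg_mul] at h2 ⊢
  rw [h2]
  rw [Fintype.card_fin]
  congr 1
  rw [div_div_eq_mul_div, div_one, mul_comm]

lemma integrable_std_gauss {d : ℕ} :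
    Integrable (fun x : Fin d → ℝ => Real.exp (-(1/2) * (x ⬝ᵥ x))) := by
  have h1 : ∀ x : Fin d → ℝ, Real.exp (-(1/2) * (x ⬝ᵥ x))
      = ∏ i, Real.exp (-(1/2) * x i ^ 2) := by
    intro x
    rw [← Real.exp_sum, dotProduct, Finset.mul_sum]
    congr 1
    apply Finset.sum_congr rfl
    intro i _
    ring_nf
  simp_rw [h1]
  apply Integrable.fintype_prod (f := fun (_ : Fin d) (t : ℝ) => Real.exp (-(1/2) * t ^ 2))
  intro i
  simpa [neg_mul] using integrable_exp_neg_mul_sq (by norm_num : (0:ℝ) < 1/2)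

lemma IsHermitian.transpose_eq' {d : ℕ} {C : Matrix (Fin d) (Fin d) ℝ} (h : C.IsHermitian) :
    Cᵀ = C := by simpa [Matrix.IsSymm] using h


lemma sqrt_pow_nat {x : ℝ} (hx : 0 ≤ x) (d : ℕ) : Real.sqrt x ^ d = Real.sqrt (x ^ d) := by
  induction d with
  | zero => simp
  | succ n ih => rw [pow_succ, pow_succ, Real.sqrt_mul (by positivity), ← ih]

open scoped MatrixOrder in
lemma quad_eq_sq {d : ℕ} {B : Matrix (Fin d) (Fin d) ℝ} (hB : B.PosDef) (x : Fin d → ℝ) :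
    x ⬝ᵥ (B *ᵥ x) = (CFC.sqrt B *ᵥ x) ⬝ᵥ (CFC.sqrt B *ᵥ x) := by
  set C := CFC.sqrt B with hCdef
  have hCC : C * C = B := CFC.sqrt_mul_sqrt_self B hB.posSemidef.nonneg
  have hCt : Cᵀ = C := IsHermitian.transpose_eq' (CFC.sqrt_nonneg B).posSemidef.isHermitian
  conv_lhs => rw [← hCC, ← Matrix.mulVec_mulVec]
  rw [Matrix.dotProduct_mulVec x C, ← Matrix.mulVec_transpose, hCt]

open scoped MatrixOrder in
lemma det_sqrt_sq {d : ℕ} {B : Matrix (Fin d) (Fin d) ℝ} (hB : B.PosDef) :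
    (CFC.sqrt B).det ^ 2 = B.det := by
  rw [sq, ← Matrix.det_mul, CFC.sqrt_mul_sqrt_self B hB.posSemidef.nonneg]

open scoped MatrixOrder in
lemma abs_det_sqrt {d : ℕ} {B : Matrix (Fin d) (Fin d) ℝ} (hB : B.PosDef) :
    |(CFC.sqrt B).det| = Real.sqrt B.det := by
  rw [← det_sqrt_sq hB, Real.sqrt_sq_eq_abs]

open scoped MatrixOrder in
lemma integral_exp_quad {d : ℕ} {B : Matrix (Fin d) (Fin d) ℝ} (hB : B.PosDef) :
    ∫ x : Fin d → ℝ, Real.exp (-(1/2) * (x ⬝ᵥ (B *ᵥ x)))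
      = Real.sqrt ((2 * π) ^ d * B.det⁻¹) := by
  have hdet : (CFC.sqrt B).det ≠ 0 := by
    intro h
    have := det_sqrt_sq hB
    rw [h] at this
    simp at this
    exact hB.det_pos.ne' this.symm
  simp_rw [quad_eq_sq hB]
  rw [integral_comp_mulVec _ hdet (fun y => Real.exp (-(1/2) * (y ⬝ᵥ y))), integral_std_gauss,
    abs_det_sqrt hB]
  rw [Real.sqrt_mul (by positivity), ← Real.sqrt_inv, ← Real.sqrt_mul (by positivity : (0:ℝ) ≤ 2) π,
    sqrt_pow_nat (by positivity), ← Real.sqrt_mul (inv_nonneg.2 hB.det_pos.le)]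
  congr 1
  ring

open scoped MatrixOrder in
lemma integrable_exp_quad {d : ℕ} {B : Matrix (Fin d) (Fin d) ℝ} (hB : B.PosDef) :
    Integrable (fun x : Fin d → ℝ => Real.exp (-(1/2) * (x ⬝ᵥ (B *ᵥ x)))) := by
  have hdet : (CFC.sqrt B).det ≠ 0 := by
    intro h
    have := det_sqrt_sq hB
    rw [h] at this
    simp at this
    exact hB.det_pos.ne' this.symm
  simp_rw [quad_eq_sq hB]
  exact integrable_comp_mulVec _ hdet integrable_std_gauss

lemma det_inv_posDef {d : ℕ} {S : Matrix (Fin d) (Fin d) ℝ} (hS : S.PosDef) :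
    S⁻¹.det = S.det⁻¹ := by
  rw [Matrix.det_nonsing_inv, Ring.inverse_eq_inv']

lemma integral_gaussDensity {d : ℕ} (m : Fin d → ℝ) {S : Matrix (Fin d) (Fin d) ℝ}
    (hS : S.PosDef) : ∫ x, gaussDensity m S x = 1 := by
  unfold gaussDensity
  rw [integral_const_mul]
  have ht : ∫ x, Real.exp (-(1/2) * ((x - m) ⬝ᵥ (S⁻¹ *ᵥ (x - m))))
      = ∫ x, Real.exp (-(1/2) * (x ⬝ᵥ (S⁻¹ *ᵥ x))) := by
    simp_rw [sub_eq_add_neg]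
    exact integral_add_right_eq_self (fun x => Real.exp (-(1/2) * (x ⬝ᵥ (S⁻¹ *ᵥ x)))) (-m)
  rw [show (1:ℝ)/2 = 1/2 from rfl] at *
  rw [ht, integral_exp_quad hS.inv, det_inv_posDef hS, inv_inv]
  exact inv_mul_cancel₀ (Real.sqrt_pos.2 (mul_pos (pow_pos Real.two_pi_pos d) hS.det_pos)).ne'

lemma integrable_gaussDensity {d : ℕ} (m : Fin d → ℝ) {S : Matrix (Fin d) (Fin d) ℝ}
    (hS : S.PosDef) : Integrable (gaussDensity m S) := by
  unfold gaussDensity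
  apply Integrable.const_mul
  have h : Integrable (fun x : Fin d → ℝ => Real.exp (-(1/2) * (x ⬝ᵥ (S⁻¹ *ᵥ x)))) :=
    integrable_exp_quad hS.inv
  have := h.comp_sub_right m
  simpa using this


lemma dot_sym {d : ℕ} {N : Matrix (Fin d) (Fin d) ℝ} (hN : Nᵀ = N) (x y : Fin d → ℝ) :
    x ⬝ᵥ (N *ᵥ y) = y ⬝ᵥ (N *ᵥ x) := by
  rw [Matrix.dotProduct_mulVec, ← Matrix.mulVec_transpose, hN, dotProduct_comm]

lemma mulVec_dot {d : ℕ} {N : Matrix (Fin d) (Fin d) ℝ} (hN : Nᵀ = N) (a z : Fin d → ℝ) :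
    (N *ᵥ a) ⬝ᵥ z = a ⬝ᵥ (N *ᵥ z) := by
  rw [dotProduct_comm, dot_sym hN]

section algebra
variable {d : ℕ} {A B : Matrix (Fin d) (Fin d) ℝ}

lemma Cinv₁ (hA : A.PosDef) (hB : B.PosDef) (hAB : (A + B).PosDef) :
    (A⁻¹ + B⁻¹)⁻¹ = A * (A + B)⁻¹ * B := by
  have hAd := hA.det_pos.ne'.isUnit
  have hBd := hB.det_pos.ne'.isUnit
  have hABd := hAB.det_pos.ne'.isUnit
  apply Matrix.inv_eq_right_inv
  calc (A⁻¹ + B⁻¹) * (A * (A + B)⁻¹ * B)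
      = (A⁻¹ * A) * ((A + B)⁻¹ * B) + B⁻¹ * (A * ((A + B)⁻¹ * B)) := by noncomm_ring
    _ = (A + B)⁻¹ * B + B⁻¹ * (A * ((A + B)⁻¹ * B)) := by
        rw [Matrix.nonsing_inv_mul A hAd, Matrix.one_mul]
    _ = (B⁻¹ * B) * ((A + B)⁻¹ * B) + B⁻¹ * (A * ((A + B)⁻¹ * B)) := by
        rw [Matrix.nonsing_inv_mul B hBd, Matrix.one_mul]
    _ = B⁻¹ * (((B + A) * (A + B)⁻¹) * B) := by noncomm_ring
    _ = B⁻¹ * ((1 : Matrix (Fin d) (Fin d) ℝ) * B) := by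
        rw [add_comm B A, Matrix.mul_nonsing_inv _ hABd]
    _ = 1 := by rw [Matrix.one_mul, Matrix.nonsing_inv_mul B hBd]

lemma Cinv₂ (hA : A.PosDef) (hB : B.PosDef) (hAB : (A + B).PosDef) :
    (A⁻¹ + B⁻¹)⁻¹ = B * (A + B)⁻¹ * A := by
  have h := Cinv₁ hB hA (by rwa [add_comm] at hAB)
  rw [add_comm B⁻¹ A⁻¹, add_comm B A] at h
  exact h

lemma PCQ (hA : A.PosDef) (hB : B.PosDef) (hAB : (A + B).PosDef) :
    A⁻¹ * (A⁻¹ + B⁻¹)⁻¹ * B⁻¹ = (A + B)⁻¹ := by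
  have hAd := hA.det_pos.ne'.isUnit
  have hBd := hB.det_pos.ne'.isUnit
  rw [Cinv₁ hA hB hAB]
  calc A⁻¹ * (A * (A + B)⁻¹ * B) * B⁻¹
      = (A⁻¹ * A) * ((A + B)⁻¹ * (B * B⁻¹)) := by noncomm_ring
    _ = (A + B)⁻¹ := by
        rw [Matrix.nonsing_inv_mul A hAd, Matrix.mul_nonsing_inv B hBd, Matrix.one_mul,
          Matrix.mul_one]

lemma QCP (hA : A.PosDef) (hB : B.PosDef) (hAB : (A + B).PosDef) :
    B⁻¹ * (A⁻¹ + B⁻¹)⁻¹ * A⁻¹ = (A + B)⁻¹ := by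
  have hAd := hA.det_pos.ne'.isUnit
  have hBd := hB.det_pos.ne'.isUnit
  rw [Cinv₂ hA hB hAB]
  calc B⁻¹ * (B * (A + B)⁻¹ * A) * A⁻¹
      = (B⁻¹ * B) * ((A + B)⁻¹ * (A * A⁻¹)) := by noncomm_ring
    _ = (A + B)⁻¹ := by
        rw [Matrix.nonsing_inv_mul B hBd, Matrix.mul_nonsing_inv A hAd, Matrix.one_mul,
          Matrix.mul_one]

lemma PCP (hA : A.PosDef) (hB : B.PosDef) (hAB : (A + B).PosDef) :
    A⁻¹ * (A⁻¹ + B⁻¹)⁻¹ * A⁻¹ = A⁻¹ - (A + B)⁻¹ := by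
  have hAd := hA.det_pos.ne'.isUnit
  have hABd := hAB.det_pos.ne'.isUnit
  rw [Cinv₁ hA hB hAB]
  have h1 : A⁻¹ * (A * (A + B)⁻¹ * B) * A⁻¹ = (A⁻¹ * A) * ((A + B)⁻¹ * (B * A⁻¹)) := by
    noncomm_ring
  rw [h1, Matrix.nonsing_inv_mul A hAd, Matrix.one_mul]
  have h2 : A⁻¹ = ((A + B)⁻¹ * (A + B)) * A⁻¹ := by
    rw [Matrix.nonsing_inv_mul _ hABd, Matrix.one_mul]
  conv_rhs => rw [h2]
  have h5 : (A+B)⁻¹ * (A * A⁻¹) = (A+B)⁻¹ := by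
    rw [Matrix.mul_nonsing_inv A hAd, Matrix.mul_one]
  have h6 : (A+B)⁻¹ * (B * A⁻¹) = ((A+B)⁻¹*(A+B))*A⁻¹ - (A+B)⁻¹*(A*A⁻¹) := by noncomm_ring
  rw [h6, h5]

lemma QCQ (hA : A.PosDef) (hB : B.PosDef) (hAB : (A + B).PosDef) :
    B⁻¹ * (A⁻¹ + B⁻¹)⁻¹ * B⁻¹ = B⁻¹ - (A + B)⁻¹ := by
  have h := PCP hB hA (by rwa [add_comm] at hAB)
  rw [add_comm B⁻¹ A⁻¹, add_comm B A] at h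
  exact h

end algebra

section product
variable {d : ℕ} {A B : Matrix (Fin d) (Fin d) ℝ}

lemma exponent_identity (hA : A.PosDef) (hB : B.PosDef) (a b x : Fin d → ℝ) :
    ((x - a) ⬝ᵥ (A⁻¹ *ᵥ (x - a))) + ((x - b) ⬝ᵥ (B⁻¹ *ᵥ (x - b)))
      = ((a - b) ⬝ᵥ ((A + B)⁻¹ *ᵥ (a - b)))
        + ((x - (A⁻¹ + B⁻¹)⁻¹ *ᵥ (A⁻¹ *ᵥ a + B⁻¹ *ᵥ b)) ⬝ᵥ
            ((A⁻¹ + B⁻¹) *ᵥ (x - (A⁻¹ + B⁻¹)⁻¹ *ᵥ (A⁻¹ *ᵥ a + B⁻¹ *ᵥ b)))) := by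
  have hAB : (A + B).PosDef := hA.add hB
  have hR : (A⁻¹ + B⁻¹).PosDef := hA.inv.add hB.inv
  have hRd := hR.det_pos.ne'.isUnit
  set P := A⁻¹ with hP
  set Q := B⁻¹ with hQ
  set R := P + Q with hRdef
  set C := R⁻¹ with hCdef
  set M := (A + B)⁻¹ with hMdef
  set u := P *ᵥ a + Q *ᵥ b with hu
  set c := C *ᵥ u with hc
  have hPt : Pᵀ = P := IsHermitian.transpose_eq' hA.inv.isHermitian
  have hQt : Qᵀ = Q := IsHermitian.transpose_eq' hB.inv.isHermitian
  have hRt : Rᵀ = R := IsHermitian.transpose_eq' hR.isHermitian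
  have hMt : Mᵀ = M := IsHermitian.transpose_eq' hAB.inv.isHermitian
  have expand : ∀ (N : Matrix (Fin d) (Fin d) ℝ), Nᵀ = N → ∀ p q : Fin d → ℝ,
      (p - q) ⬝ᵥ (N *ᵥ (p - q))
        = p ⬝ᵥ (N *ᵥ p) - 2 * (p ⬝ᵥ (N *ᵥ q)) + q ⬝ᵥ (N *ᵥ q) := by
    intro N hN p q
    rw [Matrix.mulVec_sub, dotProduct_sub, sub_dotProduct, sub_dotProduct,
      dot_sym hN q p]
    ring
  rw [expand P hPt x a, expand Q hQt x b, expand M hMt a b, expand R hRt x c]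
  -- R-atoms
  have hxRx : x ⬝ᵥ (R *ᵥ x) = x ⬝ᵥ (P *ᵥ x) + x ⬝ᵥ (Q *ᵥ x) := by
    rw [hRdef, Matrix.add_mulVec, dotProduct_add]
  have hRc : R *ᵥ c = u := by
    rw [hc, hCdef, Matrix.mulVec_mulVec, Matrix.mul_nonsing_inv _ hRd, Matrix.one_mulVec]
  have hxRc : x ⬝ᵥ (R *ᵥ c) = x ⬝ᵥ (P *ᵥ a) + x ⬝ᵥ (Q *ᵥ b) := by
    rw [hRc, hu, dotProduct_add]
  have hCt : Cᵀ = C := IsHermitian.transpose_eq' hR.inv.isHermitian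
  have hPCP : P * C * P = P - M := by
    simp only [hP, hQ, hCdef, hRdef, hMdef]
    exact PCP hA hB hAB
  have hQCQ : Q * C * Q = Q - M := by
    simp only [hP, hQ, hCdef, hRdef, hMdef]
    exact QCQ hA hB hAB
  have hPCQ : P * C * Q = M := by
    simp only [hP, hQ, hCdef, hRdef, hMdef]
    exact PCQ hA hB hAB
  have hQCP : Q * C * P = M := by
    simp only [hP, hQ, hCdef, hRdef, hMdef]
    exact QCP hA hB hAB
  have hcRc : c ⬝ᵥ (R *ᵥ c) =
      (a ⬝ᵥ (P *ᵥ a) - a ⬝ᵥ (M *ᵥ a)) + 2 * (a ⬝ᵥ (M *ᵥ b))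
        + (b ⬝ᵥ (Q *ᵥ b) - b ⬝ᵥ (M *ᵥ b)) := by
    rw [hRc, dotProduct_comm c u, hc]
    rw [hu, add_dotProduct, Matrix.mulVec_add, dotProduct_add,
      dotProduct_add]
    have h1 : (P *ᵥ a) ⬝ᵥ (C *ᵥ (P *ᵥ a)) = a ⬝ᵥ (P *ᵥ a) - a ⬝ᵥ (M *ᵥ a) := by
      rw [Matrix.mulVec_mulVec, mulVec_dot hPt, Matrix.mulVec_mulVec, ← Matrix.mul_assoc,
        hPCP, Matrix.sub_mulVec, dotProduct_sub]
    have h2 : (P *ᵥ a) ⬝ᵥ (C *ᵥ (Q *ᵥ b)) = a ⬝ᵥ (M *ᵥ b) := by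
      rw [Matrix.mulVec_mulVec, mulVec_dot hPt, Matrix.mulVec_mulVec, ← Matrix.mul_assoc, hPCQ]
    have h3 : (Q *ᵥ b) ⬝ᵥ (C *ᵥ (P *ᵥ a)) = a ⬝ᵥ (M *ᵥ b) := by
      rw [Matrix.mulVec_mulVec, mulVec_dot hQt, Matrix.mulVec_mulVec, ← Matrix.mul_assoc, hQCP,
        dot_sym hMt]
    have h4 : (Q *ᵥ b) ⬝ᵥ (C *ᵥ (Q *ᵥ b)) = b ⬝ᵥ (Q *ᵥ b) - b ⬝ᵥ (M *ᵥ b) := by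
      rw [Matrix.mulVec_mulVec, mulVec_dot hQt, Matrix.mulVec_mulVec, ← Matrix.mul_assoc,
        hQCQ, Matrix.sub_mulVec, dotProduct_sub]
    rw [h1, h2, h3, h4]
    ring
  rw [hxRx, hxRc, hcRc]
  ring

end product

section product2
variable {d : ℕ} {A B : Matrix (Fin d) (Fin d) ℝ}

lemma det_C (hA : A.PosDef) (hB : B.PosDef) (hAB : (A + B).PosDef) :
    ((A⁻¹ + B⁻¹)⁻¹).det = A.det * (A + B).det⁻¹ * B.det := by
  rw [Cinv₁ hA hB hAB, Matrix.det_mul, Matrix.det_mul, Matrix.det_nonsing_inv,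
    Ring.inverse_eq_inv']

lemma gauss_product (hA : A.PosDef) (hB : B.PosDef) (a b x : Fin d → ℝ) :
    gaussDensity a A x * gaussDensity b B x
      = gaussDensity b (A + B) a *
        gaussDensity ((A⁻¹ + B⁻¹)⁻¹ *ᵥ (A⁻¹ *ᵥ a + B⁻¹ *ᵥ b)) ((A⁻¹ + B⁻¹)⁻¹) x := by
  have hAB : (A + B).PosDef := hA.add hB
  have hR : (A⁻¹ + B⁻¹).PosDef := hA.inv.add hB.inv
  have hRd := hR.det_pos.ne'.isUnit
  have hC : ((A⁻¹ + B⁻¹)⁻¹).PosDef := hR.inv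
  unfold gaussDensity
  rw [Matrix.nonsing_inv_nonsing_inv _ hRd]
  have h2π : (0:ℝ) ≤ (2 * Real.pi) ^ d := by positivity
  have hZ : Real.sqrt ((2 * Real.pi) ^ d * A.det) * Real.sqrt ((2 * Real.pi) ^ d * B.det)
      = Real.sqrt ((2 * Real.pi) ^ d * (A + B).det)
        * Real.sqrt ((2 * Real.pi) ^ d * ((A⁻¹ + B⁻¹)⁻¹).det) := by
    rw [← Real.sqrt_mul (mul_nonneg h2π hA.det_pos.le),
      ← Real.sqrt_mul (mul_nonneg h2π hAB.det_pos.le)]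
    congr 1
    rw [det_C hA hB hAB]
    field_simp [hAB.det_pos.ne']
  have hE := exponent_identity hA hB a b x
  calc (Real.sqrt ((2 * Real.pi) ^ d * A.det))⁻¹
        * Real.exp (-(1/2) * ((x - a) ⬝ᵥ (A⁻¹ *ᵥ (x - a))))
        * ((Real.sqrt ((2 * Real.pi) ^ d * B.det))⁻¹
          * Real.exp (-(1/2) * ((x - b) ⬝ᵥ (B⁻¹ *ᵥ (x - b)))))
      = (Real.sqrt ((2 * Real.pi) ^ d * A.det) * Real.sqrt ((2 * Real.pi) ^ d * B.det))⁻¹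
        * Real.exp (-(1/2) * ((x - a) ⬝ᵥ (A⁻¹ *ᵥ (x - a)))
            + -(1/2) * ((x - b) ⬝ᵥ (B⁻¹ *ᵥ (x - b)))) := by
        rw [Real.exp_add, mul_inv]
        ring
    _ = (Real.sqrt ((2 * Real.pi) ^ d * (A + B).det)
          * Real.sqrt ((2 * Real.pi) ^ d * ((A⁻¹ + B⁻¹)⁻¹).det))⁻¹
        * Real.exp (-(1/2) * ((a - b) ⬝ᵥ ((A + B)⁻¹ *ᵥ (a - b)))
            + -(1/2) * ((x - (A⁻¹ + B⁻¹)⁻¹ *ᵥ (A⁻¹ *ᵥ a + B⁻¹ *ᵥ b)) ⬝ᵥ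
                ((A⁻¹ + B⁻¹) *ᵥ (x - (A⁻¹ + B⁻¹)⁻¹ *ᵥ (A⁻¹ *ᵥ a + B⁻¹ *ᵥ b))))) := by
        rw [hZ]
        congr 1
        congr 1
        linear_combination (-(1/2 : ℝ)) * hE
    _ = _ := by
        rw [Real.exp_add, mul_inv]
        ring

end product2

lemma Matrix.PosDef.smul_posDef {d : ℕ} {M : Matrix (Fin d) (Fin d) ℝ} (hM : M.PosDef)
    {c : ℝ} (hc : 0 < c) : (c • M).PosDef := by
  exact hM.smul hc

/-- With the WSABI-L setup, let `π(x) = N(x; μ_π, Σ_π)` be a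
Gaussian prior density with `Σ_π` symmetric positive definite.  Then for every `α`,
`∫ (α + ½ m̃(x)²) π(x) dx = α + Σ_{i,j} w^m_{ij} N((X_i + X_j)/2; μ_π, W/2 + Σ_π)`,
where `w^m_{ij} := ½ v² ω_i ω_j N(X_i; X_j, 2W)`. -/
theorem statement11
    {d n : ℕ} (v : ℝ) (hv : 0 < v)
    (W : Matrix (Fin d) (Fin d) ℝ) (hW : W.PosDef)
    (X : Fin n → (Fin d → ℝ)) (y : Fin n → ℝ)
    (hK : IsUnit (gramKxx v W X).det)
    (μπ : Fin d → ℝ) (Sπ : Matrix (Fin d) (Fin d) ℝ) (hSπ : Sπ.PosDef) :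
    ∀ α : ℝ,
      ∫ x, (α + 1 / 2 * gpMean v W X y x ^ 2) * gaussDensity μπ Sπ x
        = α + ∑ i, ∑ j,
            (1 / 2 * v ^ 2 * woodbury v W X y i * woodbury v W X y j *
              gaussDensity (X j) ((2 : ℝ) • W) (X i)) *
            gaussDensity μπ ((1 / 2 : ℝ) • W + Sπ) ((1 / 2 : ℝ) • (X i + X j)) := by
  intro α
  classical
  have hWd := hW.det_pos.ne'.isUnit
  have hW2 : ((1/2 : ℝ) • W).PosDef := hW.smul_posDef (by norm_num)
  have hV : ((((1/2 : ℝ) • W)⁻¹ + Sπ⁻¹)⁻¹).PosDef := (hW2.inv.add hSπ.inv).inv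
  have hhalf : (W⁻¹ + W⁻¹)⁻¹ = (1/2 : ℝ) • W := by
    rw [← two_smul ℝ W⁻¹]
    apply Matrix.inv_eq_right_inv
    calc ((2:ℝ) • W⁻¹) * ((1/2 : ℝ) • W) = (2:ℝ) • ((1/2 : ℝ) • (W⁻¹ * W)) := by
          rw [Matrix.smul_mul, Matrix.mul_smul]
      _ = 1 := by rw [Matrix.nonsing_inv_mul _ hWd, smul_smul]; norm_num
  have hctr : ∀ i j, ((1/2 : ℝ) • W) *ᵥ (W⁻¹ *ᵥ X i + W⁻¹ *ᵥ X j)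
      = (1/2 : ℝ) • (X i + X j) := by
    intro i j
    rw [Matrix.smul_mulVec, Matrix.mulVec_add, Matrix.mulVec_mulVec,
      Matrix.mulVec_mulVec, Matrix.mul_nonsing_inv _ hWd, Matrix.one_mulVec,
      Matrix.one_mulVec]
  have step1 : ∀ i j (x : Fin d → ℝ), gaussDensity (X i) W x * gaussDensity (X j) W x
      = gaussDensity (X j) ((2:ℝ) • W) (X i) *
        gaussDensity ((1/2 : ℝ) • (X i + X j)) ((1/2 : ℝ) • W) x := by
    intro i j x
    have h := gauss_product hW hW (X i) (X j) x
    rw [hhalf, hctr i j, show W + W = (2:ℝ) • W from (two_smul ℝ W).symm] at h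
    exact h
  have step2 : ∀ i j (x : Fin d → ℝ),
      gaussDensity ((1/2 : ℝ) • (X i + X j)) ((1/2 : ℝ) • W) x * gaussDensity μπ Sπ x
      = gaussDensity μπ ((1/2 : ℝ) • W + Sπ) ((1/2 : ℝ) • (X i + X j)) *
        gaussDensity ((((1/2 : ℝ) • W)⁻¹ + Sπ⁻¹)⁻¹ *ᵥ
            (((1/2 : ℝ) • W)⁻¹ *ᵥ ((1/2 : ℝ) • (X i + X j)) + Sπ⁻¹ *ᵥ μπ))
          ((((1/2 : ℝ) • W)⁻¹ + Sπ⁻¹)⁻¹) x := by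
    intro i j x
    exact gauss_product hW2 hSπ ((1/2 : ℝ) • (X i + X j)) μπ x
  have key : ∀ i j (x : Fin d → ℝ),
      gaussDensity (X i) W x * gaussDensity (X j) W x * gaussDensity μπ Sπ x
      = (gaussDensity (X j) ((2:ℝ) • W) (X i) *
          gaussDensity μπ ((1/2 : ℝ) • W + Sπ) ((1/2 : ℝ) • (X i + X j))) *
        gaussDensity ((((1/2 : ℝ) • W)⁻¹ + Sπ⁻¹)⁻¹ *ᵥ
            (((1/2 : ℝ) • W)⁻¹ *ᵥ ((1/2 : ℝ) • (X i + X j)) + Sπ⁻¹ *ᵥ μπ))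
          ((((1/2 : ℝ) • W)⁻¹ + Sπ⁻¹)⁻¹) x := by
    intro i j x
    rw [step1 i j x, mul_assoc, step2 i j x]
    ring
  -- pointwise rewriting of the integrand
  have hpt : ∀ x : Fin d → ℝ,
      (α + 1 / 2 * gpMean v W X y x ^ 2) * gaussDensity μπ Sπ x
      = α * gaussDensity μπ Sπ x +
        ∑ p : Fin n × Fin n,
          ((1 / 2 * v ^ 2 * woodbury v W X y p.1 * woodbury v W X y p.2 *
              gaussDensity (X p.2) ((2 : ℝ) • W) (X p.1)) *
            gaussDensity μπ ((1 / 2 : ℝ) • W + Sπ) ((1 / 2 : ℝ) • (X p.1 + X p.2))) *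
          gaussDensity ((((1/2 : ℝ) • W)⁻¹ + Sπ⁻¹)⁻¹ *ᵥ
              (((1/2 : ℝ) • W)⁻¹ *ᵥ ((1/2 : ℝ) • (X p.1 + X p.2)) + Sπ⁻¹ *ᵥ μπ))
            ((((1/2 : ℝ) • W)⁻¹ + Sπ⁻¹)⁻¹) x := by
    intro x
    have hsq : gpMean v W X y x ^ 2
        = v ^ 2 * ∑ i, ∑ j, (woodbury v W X y i * gaussDensity (X i) W x) *
            (woodbury v W X y j * gaussDensity (X j) W x) := by
      show (v * ∑ i, woodbury v W X y i * gaussDensity (X i) W x) ^ 2 = _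
      rw [mul_pow, sq (∑ i, woodbury v W X y i * gaussDensity (X i) W x),
        Finset.sum_mul_sum]
    rw [hsq, ← Fintype.sum_prod_type', Finset.mul_sum, Finset.mul_sum, add_mul,
      Finset.sum_mul]
    congr 1
    apply Finset.sum_congr rfl
    intro p _
    have hk := key p.1 p.2 x
    linear_combination (1/2 * v^2 * woodbury v W X y p.1 * woodbury v W X y p.2) * hk
  rw [show (fun x => (α + 1 / 2 * gpMean v W X y x ^ 2) * gaussDensity μπ Sπ x) = _
      from funext hpt]
  have hint1 : Integrable (fun x : Fin d → ℝ => α * gaussDensity μπ Sπ x) :=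
    (integrable_gaussDensity μπ hSπ).const_mul α
  have hint2 : ∀ p : Fin n × Fin n, Integrable (fun x : Fin d → ℝ =>
      ((1 / 2 * v ^ 2 * woodbury v W X y p.1 * woodbury v W X y p.2 *
          gaussDensity (X p.2) ((2 : ℝ) • W) (X p.1)) *
        gaussDensity μπ ((1 / 2 : ℝ) • W + Sπ) ((1 / 2 : ℝ) • (X p.1 + X p.2))) *
      gaussDensity ((((1/2 : ℝ) • W)⁻¹ + Sπ⁻¹)⁻¹ *ᵥ
          (((1/2 : ℝ) • W)⁻¹ *ᵥ ((1/2 : ℝ) • (X p.1 + X p.2)) + Sπ⁻¹ *ᵥ μπ))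
        ((((1/2 : ℝ) • W)⁻¹ + Sπ⁻¹)⁻¹) x) := fun p =>
    (integrable_gaussDensity _ hV).const_mul _
  rw [MeasureTheory.integral_add hint1 (MeasureTheory.integrable_finset_sum _
    (fun p _ => hint2 p))]
  rw [MeasureTheory.integral_finset_sum _ (fun p _ => hint2 p)]
  rw [MeasureTheory.integral_const_mul, integral_gaussDensity μπ hSπ, mul_one]
  congr 1
  rw [← Fintype.sum_prod_type']
  apply Finset.sum_congr rfl
  intro p _
  rw [MeasureTheory.integral_const_mul, integral_gaussDensity _ hV, mul_one]
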